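/- If (S₁, S₂) has the bivariate Rayleigh density with parameters σ₁², σ₂² > 0 and ρ² ∈ [0,1), then the Pearson correlation coefficient of S₁² and S₂² equals ρ²; that is, Cov[S₁², S₂²]/√(Var[S₁²]·Var[S₂²]) = ρ². -/

import Mathlib

open MeasureTheory Real Set

/-- The zeroth-order modified Bessel function of the first kind,
I₀(x) = (1/π)∫₀^π exp(x cos φ) dφ. -/
noncomputable def besselI0 (x : ℝ) : ℝ :=
  (1 / Real.pi) * ∫ φ in (0:ℝ)..Real.pi, Real.exp (x * Real.cos φ)

/-- The bivariate Rayleigh density with parameters σ₁², σ₂² and power correlation ρ². -/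
noncomputable def bivRayleighPDF (σ1sq σ2sq ρsq s₁ s₂ : ℝ) : ℝ :=
  (4 * s₁ * s₂ / (σ1sq * σ2sq * (1 - ρsq)))
    * Real.exp (-(s₁^2 / σ1sq + s₂^2 / σ2sq) / (1 - ρsq))
    * besselI0 ((2 / (1 - ρsq)) * Real.sqrt (ρsq * (s₁^2 / σ1sq) * (s₂^2 / σ2sq)))

/-- Expectation of g(s₁,s₂) under the bivariate Rayleigh law. -/
noncomputable def bivRayleighMoment (σ1sq σ2sq ρsq : ℝ) (g : ℝ → ℝ → ℝ) : ℝ :=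
  ∫ p in (Ioi (0:ℝ)) ×ˢ (Ioi (0:ℝ)),
    g p.1 p.2 * bivRayleighPDF σ1sq σ2sq ρsq p.1 p.2 ∂(volume : Measure (ℝ × ℝ))


lemma my_integral_cos_pow_even (k : ℕ) :
    ∫ x in (0:ℝ)..π, Real.cos x ^ (2*k) = π * (2*k).factorial / (4^k * (k.factorial)^2) := by
  induction k with
  | zero => simp
  | succ k ih =>
    have h : 2*(k+1) = 2*k + 2 := by ring
    rw [h, integral_cos_pow, Real.sin_pi, Real.sin_zero, ih]
    have h2 : ((2*(k+1)).factorial : ℝ) = (2*k+2)*(2*k+1)*(2*k).factorial := by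
      rw [show 2*(k+1) = (2*k+1)+1 by ring]
      rw [Nat.factorial_succ, Nat.factorial_succ]
      push_cast; ring
    have h3 : ((k+1).factorial : ℝ) = (k+1)*k.factorial := by
      rw [Nat.factorial_succ]; push_cast; ring
    rw [show 2*(k+1) = (2*k+1)+1 by ring] at *
    rw [h2]
    have hk : ((2*k).factorial : ℝ) ≠ 0 := by positivity
    have hk2 : (k.factorial : ℝ) ≠ 0 := by positivity
    rw [h3]
    field_simp [h3]
    push_cast
    ring

lemma my_integral_cos_pow_odd (k : ℕ) :
    ∫ x in (0:ℝ)..π, Real.cos x ^ (2*k+1) = 0 := by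
  induction k with
  | zero => simp
  | succ k ih =>
    rw [show 2*(k+1)+1 = (2*k+1) + 2 by ring, integral_cos_pow, Real.sin_pi, Real.sin_zero, ih]
    ring


lemma besselI0_summand_summable (y : ℝ) (hy : 0 ≤ y) :
    Summable (fun k : ℕ => y ^ k / (4^k * (k.factorial)^2) : ℕ → ℝ) := by
  refine Summable.of_nonneg_of_le (fun k => by positivity)
    (fun k => ?_) (Real.summable_pow_div_factorial (y/4))
  have h1 : (1:ℝ) ≤ k.factorial := by
    exact_mod_cast Nat.one_le_iff_ne_zero.mpr k.factorial_ne_zero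
  have : y ^ k / (4^k * (k.factorial:ℝ)^2) = (y/4)^k / (k.factorial:ℝ)^2 := by
    rw [div_pow]; ring
  rw [this]
  apply div_le_div_of_nonneg_left (by positivity) (by positivity) (by nlinarith)


lemma besselI0_eq_tsum (x : ℝ) :
    besselI0 x = ∑' k : ℕ, x^(2*k) / (4^k * (k.factorial)^2) := by
  have hexp : ∀ φ : ℝ, Real.exp (x * Real.cos φ)
      = ∑' n : ℕ, (x * Real.cos φ)^n / n.factorial := fun φ => by
    rw [Real.exp_eq_exp_ℝ, NormedSpace.exp_eq_tsum_div]
  have hmeas : ∀ n : ℕ, AEStronglyMeasurable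
      (fun φ : ℝ => (x * Real.cos φ)^n / n.factorial)
      (volume.restrict (Ioc (0:ℝ) π)) := fun n =>
    (Continuous.aestronglyMeasurable (by fun_prop))
  have hbound : ∑' n : ℕ, ∫⁻ φ in Ioc (0:ℝ) π,
      ‖(x * Real.cos φ)^n / n.factorial‖₊ ≠ ⊤ := by
    have hb : ∀ n : ℕ, ∫⁻ φ in Ioc (0:ℝ) π, ‖(x * Real.cos φ)^n / n.factorial‖₊
        ≤ ENNReal.ofReal (|x|^n / n.factorial) * ENNReal.ofReal π := by
      intro n
      calc ∫⁻ φ in Ioc (0:ℝ) π, ‖(x * Real.cos φ)^n / n.factorial‖₊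
          ≤ ∫⁻ _ in Ioc (0:ℝ) π, ENNReal.ofReal (|x|^n / n.factorial) := by
            apply lintegral_mono; intro φ
            simp only
            rw [← enorm_eq_nnnorm, Real.enorm_eq_ofReal_abs]
            apply ENNReal.ofReal_le_ofReal
            rw [abs_div, abs_pow, abs_mul, Nat.abs_cast]
            gcongr
            calc |x| * |Real.cos φ| ≤ |x| * 1 := by
                  gcongr
                  exact Real.abs_cos_le_one φ
              _ = |x| := mul_one _
        _ = ENNReal.ofReal (|x|^n / n.factorial) * ENNReal.ofReal π := by
            rw [lintegral_const, Measure.restrict_apply_univ, Real.volume_Ioc, sub_zero]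
    apply ne_top_of_le_ne_top ?_ (ENNReal.tsum_le_tsum hb)
    rw [ENNReal.tsum_mul_right]
    apply ENNReal.mul_ne_top ?_ ENNReal.ofReal_ne_top
    rw [← ENNReal.ofReal_tsum_of_nonneg (fun n => by positivity)
      (Real.summable_pow_div_factorial |x|)]
    exact ENNReal.ofReal_ne_top
  have hswap : ∫ φ in (0:ℝ)..π, Real.exp (x * Real.cos φ)
      = ∑' n : ℕ, (x^n / n.factorial) * ∫ φ in (0:ℝ)..π, Real.cos φ ^ n := by
    rw [intervalIntegral.integral_of_le Real.pi_pos.le]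
    rw [show (fun φ => Real.exp (x * Real.cos φ)) = fun φ => ∑' n : ℕ,
      (x * Real.cos φ)^n / n.factorial from funext hexp]
    rw [integral_tsum hmeas hbound]
    congr 1
    funext n
    rw [← intervalIntegral.integral_of_le Real.pi_pos.le]
    rw [← intervalIntegral.integral_const_mul]
    congr 1
    funext φ
    rw [mul_pow]; ring
  rw [besselI0, hswap]
  set f : ℕ → ℝ := fun n => (x^n / n.factorial) * ∫ φ in (0:ℝ)..π, Real.cos φ ^ n with hf
  have hfe : ∀ k : ℕ, f (2*k) = π * ((x^2)^k / (4^k * (k.factorial)^2)) := by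
    intro k
    have h2k : ((2*k).factorial : ℝ) ≠ 0 := by positivity
    rw [hf]
    simp only
    rw [my_integral_cos_pow_even, ← pow_mul]
    field_simp
  have hfo : ∀ k : ℕ, f (2*k+1) = 0 := by
    intro k
    rw [hf]; simp only
    rw [my_integral_cos_pow_odd, mul_zero]
  have he : Summable (fun k => f (2*k)) := by
    rw [show (fun k => f (2*k)) = fun k => π * ((x^2)^k / (4^k * (k.factorial)^2))
      from funext hfe]
    exact (besselI0_summand_summable (x^2) (sq_nonneg x)).mul_left π
  have ho : Summable (fun k => f (2*k+1)) := by
    rw [show (fun k => f (2*k+1)) = fun _ => (0:ℝ) from funext hfo]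
    exact summable_zero
  have hsplit := tsum_even_add_odd he ho
  rw [← hsplit]
  have : ∑' k : ℕ, f (2*k+1) = 0 := by
    rw [show (fun k => f (2*k+1)) = fun _ => (0:ℝ) from funext hfo]; exact tsum_zero
  rw [this, add_zero]
  rw [show (fun k => f (2*k)) = fun k => π * ((x^2)^k / (4^k * (k.factorial)^2))
    from funext hfe]
  rw [tsum_mul_left]
  rw [← mul_assoc, one_div, inv_mul_cancel₀ Real.pi_ne_zero, one_mul]
  congr 1
  funext k
  rw [pow_mul]


lemma my_integrableOn_pow_mul_exp (j : ℕ) {a : ℝ} (ha : 0 < a) :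
    IntegrableOn (fun s : ℝ => s ^ (2*j+1) * Real.exp (-(a * s^2))) (Ioi 0) := by
  have hj : (-1:ℝ) < 2*j+1 := by
    have := Nat.cast_nonneg (α := ℝ) j; linarith
  have h := integrableOn_rpow_mul_exp_neg_mul_sq ha (s := (2*(j:ℝ)+1)) hj
  apply h.congr_fun ?_ measurableSet_Ioi
  intro s hs
  rw [mem_Ioi] at hs
  simp only
  rw [← Real.rpow_natCast s (2*j+1), neg_mul]
  push_cast
  ring_nf

lemma my_integral_pow_mul_exp (j : ℕ) {a : ℝ} (ha : 0 < a) :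
    ∫ s in Ioi (0:ℝ), s ^ (2*j+1) * Real.exp (-(a * s^2))
      = j.factorial / (2 * a^(j+1)) := by
  have key : ∫ s in Ioi (0:ℝ), s ^ ((2*j+1 : ℕ) : ℝ) * Real.exp (-a * s ^ (2:ℝ))
      = a ^ (-(((2*j+1:ℕ):ℝ) + 1) / 2) * (1/2) * Real.Gamma ((((2*j+1:ℕ):ℝ) + 1)/2) :=
    integral_rpow_mul_exp_neg_mul_rpow (by norm_num)
      (by push_cast; have := Nat.cast_nonneg (α := ℝ) j; linarith) ha
  have heq : ∫ s in Ioi (0:ℝ), s ^ (2*j+1) * Real.exp (-(a * s^2))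
      = ∫ s in Ioi (0:ℝ), s ^ ((2*j+1 : ℕ) : ℝ) * Real.exp (-a * s ^ (2:ℝ)) := by
    apply setIntegral_congr_fun measurableSet_Ioi
    intro s hs
    rw [mem_Ioi] at hs
    simp only
    rw [← Real.rpow_natCast s (2*j+1), neg_mul, Real.rpow_two]
  rw [heq, key]
  have h1 : (((2*j+1:ℕ):ℝ) + 1)/2 = (j:ℝ) + 1 := by push_cast; ring
  have h2 : -(((2*j+1:ℕ):ℝ) + 1)/2 = -((j:ℝ) + 1) := by push_cast; ring
  rw [h1, h2]
  have h3 : Real.Gamma ((j:ℝ) + 1) = j.factorial := by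
    exact_mod_cast Real.Gamma_nat_eq_factorial j
  rw [h3]
  rw [show -((j:ℝ)+1) = -(((j+1:ℕ):ℝ)) by push_cast; ring]
  rw [Real.rpow_neg ha.le, Real.rpow_natCast]
  field_simp


lemma choose_two_mul (n : ℕ) : 2 * (n+2).choose 2 = (n+1)*(n+2) := by
  induction n with
  | zero => rfl
  | succ n ih =>
    rw [show n+1+2 = (n+2)+1 from rfl, Nat.choose_succ_succ]
    rw [Nat.mul_add, ih, Nat.choose_one_right]
    ring

lemma hasSum_geom1 {r : ℝ} (hr : |r| < 1) :
    HasSum (fun k : ℕ => ((k:ℝ)+1) * r^k) (1/(1-r)^2) := by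
  have h := hasSum_choose_mul_geometric_of_norm_lt_one 1 (by rwa [Real.norm_eq_abs] : ‖r‖ < 1)
  have hfun : (fun k : ℕ => (((k + 1).choose 1 : ℕ) : ℝ) * r ^ k)
      = fun k : ℕ => ((k:ℝ)+1) * r^k := by
    funext k; rw [Nat.choose_one_right]; push_cast; ring
  rw [hfun] at h
  convert h using 1
lemma hasSum_geom2 {r : ℝ} (hr : |r| < 1) :
    HasSum (fun k : ℕ => ((k:ℝ)+1) * ((k:ℝ)+2) * r^k) (2/(1-r)^3) := by
  have h := (hasSum_choose_mul_geometric_of_norm_lt_one 2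
    (by rwa [Real.norm_eq_abs] : ‖r‖ < 1)).mul_left 2
  have hfun : (fun k : ℕ => (2:ℝ) * ((((k + 2).choose 2 : ℕ) : ℝ) * r ^ k))
      = fun k : ℕ => ((k:ℝ)+1) * ((k:ℝ)+2) * r^k := by
    funext k
    have h2 : ((2 * (k+2).choose 2 : ℕ) : ℝ) = (((k+1)*(k+2) : ℕ) : ℝ) := by
      rw [choose_two_mul k]
    push_cast at h2
    rw [← mul_assoc, h2]
  rw [hfun] at h
  have hval : (2:ℝ) * (1/(1-r)^(2+1)) = 2/(1-r)^3 := by ring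
  rw [hval] at h
  exact h

lemma hasSum_geom11 {r : ℝ} (hr : |r| < 1) :
    HasSum (fun k : ℕ => ((k:ℝ)+1)^2 * r^k) ((1+r)/(1-r)^3) := by
  have h := (hasSum_geom2 hr).sub (hasSum_geom1 hr)
  have hne : (1:ℝ) - r ≠ 0 := by
    intro h0
    rw [abs_lt] at hr
    linarith
  have hfun : (fun k : ℕ => ((k:ℝ)+1) * ((k:ℝ)+2) * r^k - ((k:ℝ)+1) * r^k)
      = fun k : ℕ => ((k:ℝ)+1)^2 * r^k := by
    funext k; ring
  rw [hfun] at h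
  have hval : (2:ℝ)/(1-r)^3 - 1/(1-r)^2 = (1+r)/(1-r)^3 := by
    field_simp
    ring
  rw [hval] at h
  exact h

lemma moment_eq (σ1 σ2 r : ℝ) (h1 : 0 < σ1) (h2 : 0 < σ2) (hr0 : 0 ≤ r) (hr1 : r < 1)
    (m n : ℕ)
    (hs : Summable (fun k : ℕ => ((m+k).factorial : ℝ) * ((n+k).factorial : ℝ)
      / ((k.factorial : ℝ))^2 * r^k)) :
    bivRayleighMoment σ1 σ2 r (fun s₁ s₂ => s₁^(2*m) * s₂^(2*n)) =
      σ1^m * σ2^n * (1-r)^(m+n+1)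
        * ∑' k : ℕ, ((m+k).factorial : ℝ) * ((n+k).factorial : ℝ)
            / ((k.factorial : ℝ))^2 * r^k := by
  have ht : 0 < 1 - r := by linarith
  set t : ℝ := 1 - r with ht_def
  set a₁ : ℝ := (σ1*t)⁻¹ with ha₁_def
  set a₂ : ℝ := (σ2*t)⁻¹ with ha₂_def
  have ha₁ : 0 < a₁ := by positivity
  have ha₂ : 0 < a₂ := by positivity
  set g1 : ℕ → ℝ → ℝ := fun k s => s^(2*(m+k)+1) * Real.exp (-(a₁ * s^2)) with hg1_def
  set g2 : ℕ → ℝ → ℝ := fun k s => s^(2*(n+k)+1) * Real.exp (-(a₂ * s^2)) with hg2_def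
  set C : ℕ → ℝ := fun k =>
    4 * r^k / (σ1^(k+1) * σ2^(k+1) * t^(2*k+1) * ((k.factorial : ℝ))^2) with hC_def
  set T : ℕ → ℝ × ℝ → ℝ := fun k p => C k * (g1 k p.1 * g2 k p.2) with hT_def
  set K : ℝ := σ1^m * σ2^n * t^(m+n+1) with hK_def
  set d : ℕ → ℝ := fun k => ((m+k).factorial : ℝ) * ((n+k).factorial : ℝ)
      / ((k.factorial : ℝ))^2 * r^k with hd_def
  set S : Set (ℝ × ℝ) := (Ioi (0:ℝ)) ×ˢ (Ioi (0:ℝ)) with hS_def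
  have hσ1 : σ1 ≠ 0 := h1.ne'
  have hσ2 : σ2 ≠ 0 := h2.ne'
  have htne : t ≠ 0 := ht.ne'
  -- pointwise series expansion
  have hpt : ∀ p : ℝ × ℝ, p.1^(2*m) * p.2^(2*n) * bivRayleighPDF σ1 σ2 r p.1 p.2
      = ∑' k : ℕ, T k p := by
    intro p
    obtain ⟨s₁, s₂⟩ := p
    simp only [bivRayleighPDF]
    rw [besselI0_eq_tsum]
    have h0 : s₁^(2*m) * s₂^(2*n) * (4 * s₁ * s₂ / (σ1 * σ2 * t)
          * Real.exp (-(s₁^2/σ1 + s₂^2/σ2)/t)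
          * ∑' k : ℕ, (2/t * Real.sqrt (r * (s₁^2/σ1) * (s₂^2/σ2)))^(2*k)
              / (4^k * (k.factorial)^2))
        = (s₁^(2*m) * s₂^(2*n) * (4 * s₁ * s₂ / (σ1 * σ2 * t))
          * Real.exp (-(s₁^2/σ1 + s₂^2/σ2)/t))
          * ∑' k : ℕ, (2/t * Real.sqrt (r * (s₁^2/σ1) * (s₂^2/σ2)))^(2*k)
              / (4^k * (k.factorial)^2) := by ring
    rw [h0, ← tsum_mul_left]
    apply tsum_congr
    intro k
    have hy : 0 ≤ r * (s₁^2/σ1) * (s₂^2/σ2) := by positivity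
    have hX : (2/t * Real.sqrt (r * (s₁^2/σ1) * (s₂^2/σ2)))^(2*k)
        = 4^k/t^(2*k) * (r^k * (s₁^(2*k)/σ1^k) * (s₂^(2*k)/σ2^k)) := by
      rw [pow_mul, mul_pow, Real.sq_sqrt hy]
      rw [show (2/t)^2 = 4/t^2 by rw [div_pow]; norm_num]
      rw [mul_pow, div_pow, ← pow_mul, mul_pow, mul_pow, div_pow, div_pow,
        ← pow_mul, ← pow_mul]
    have hE : Real.exp (-(s₁^2/σ1 + s₂^2/σ2)/t)
        = Real.exp (-(a₁ * s₁^2)) * Real.exp (-(a₂ * s₂^2)) := by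
      rw [← Real.exp_add]
      congr 1
      rw [ha₁_def, ha₂_def]
      field_simp
      ring
    rw [hX, hE, hT_def, hC_def, hg1_def, hg2_def]
    clear hX hE h0
    simp only
    have hkf : ((k.factorial : ℝ)) ≠ 0 := by positivity
    field_simp
    ring
  -- measurability
  have hTmeas : ∀ k : ℕ, AEStronglyMeasurable (T k)
      ((volume : Measure (ℝ × ℝ)).restrict S) :=
    fun k => Continuous.aestronglyMeasurable (by fun_prop)
  -- integrability
  have hg1int : ∀ k, IntegrableOn (g1 k) (Ioi 0) :=
    fun k => my_integrableOn_pow_mul_exp (m+k) ha₁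
  have hg2int : ∀ k, IntegrableOn (g2 k) (Ioi 0) :=
    fun k => my_integrableOn_pow_mul_exp (n+k) ha₂
  have hTint : ∀ k, Integrable (T k) ((volume : Measure (ℝ × ℝ)).restrict S) := by
    intro k
    rw [hS_def, Measure.volume_eq_prod, ← Measure.prod_restrict]
    exact ((hg1int k).mul_prod (hg2int k)).const_mul (C k)
  -- integral values
  have hint : ∀ k, ∫ p, T k p ∂((volume : Measure (ℝ × ℝ)).restrict S) = K * d k := by
    intro k
    rw [hS_def, Measure.volume_eq_prod, ← Measure.prod_restrict, hT_def]
    simp only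
    rw [MeasureTheory.integral_const_mul, integral_prod_mul]
    rw [hg1_def, hg2_def]
    simp only
    rw [my_integral_pow_mul_exp (m+k) ha₁, my_integral_pow_mul_exp (n+k) ha₂]
    rw [hC_def, hK_def, hd_def, ha₁_def, ha₂_def]
    simp only
    rw [inv_pow, inv_pow, mul_pow, mul_pow]
    have hkf : ((k.factorial : ℝ)) ≠ 0 := by positivity
    field_simp
    ring
  -- nonnegativity
  have hKd : ∀ k, 0 ≤ K * d k := by
    intro k
    apply mul_nonneg
    · rw [hK_def]; positivity
    · rw [hd_def]
      have : (0:ℝ) ≤ r^k := pow_nonneg hr0 k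
      positivity
  have hTnn : ∀ k, 0 ≤ᵐ[(volume : Measure (ℝ × ℝ)).restrict S] T k := by
    intro k
    refine (ae_restrict_iff' (by rw [hS_def]; exact measurableSet_Ioi.prod measurableSet_Ioi)).mpr
      (Filter.Eventually.of_forall fun p hp => ?_)
    rw [hS_def, mem_prod, mem_Ioi, mem_Ioi] at hp
    obtain ⟨hp1, hp2⟩ := hp
    rw [hT_def]
    simp only
    apply mul_nonneg
    · rw [hC_def]
      have : (0:ℝ) ≤ r^k := pow_nonneg hr0 k
      positivity
    · apply mul_nonneg
      · rw [hg1_def]; positivity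
      · rw [hg2_def]; positivity
  -- lintegral values
  have hlint : ∀ k, ∫⁻ p, ‖T k p‖₊ ∂((volume : Measure (ℝ × ℝ)).restrict S)
      = ENNReal.ofReal (K * d k) := by
    intro k
    have h1' : ∫⁻ p, ‖T k p‖₊ ∂((volume : Measure (ℝ × ℝ)).restrict S)
        = ∫⁻ p, ENNReal.ofReal (T k p) ∂((volume : Measure (ℝ × ℝ)).restrict S) := by
      apply lintegral_congr_ae
      exact (hTnn k).mono fun p hp => Real.enorm_eq_ofReal hp
    rw [h1', ← ofReal_integral_eq_lintegral_ofReal (hTint k) (hTnn k), hint k]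
  -- main computation
  calc bivRayleighMoment σ1 σ2 r (fun s₁ s₂ => s₁^(2*m) * s₂^(2*n))
      = ∫ p in S, (∑' k : ℕ, T k p) ∂(volume : Measure (ℝ × ℝ)) := by
        rw [bivRayleighMoment]
        congr 1
        funext p
        exact hpt p
    _ = ∑' k : ℕ, ∫ p in S, T k p ∂(volume : Measure (ℝ × ℝ)) := by
        apply integral_tsum hTmeas
        rw [show (fun k => ∫⁻ p, ‖T k p‖ₑ ∂((volume : Measure (ℝ × ℝ)).restrict S))
          = fun k => ENNReal.ofReal (K * d k) from funext hlint]
        rw [← ENNReal.ofReal_tsum_of_nonneg hKd (hs.mul_left K)]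
        exact ENNReal.ofReal_ne_top
    _ = ∑' k : ℕ, K * d k := tsum_congr hint
    _ = K * ∑' k : ℕ, d k := tsum_mul_left
    _ = σ1^m * σ2^n * (1-r)^(m+n+1) * ∑' k : ℕ, ((m+k).factorial : ℝ)
          * ((n+k).factorial : ℝ) / ((k.factorial : ℝ))^2 * r^k := by
        rw [hK_def, hd_def, ht_def]

/-- The Pearson correlation coefficient of S₁² and S₂² under the bivariate Rayleigh
law equals the power correlation coefficient ρ². -/
theorem bivRayleigh_power_correlation (σ1sq σ2sq ρsq : ℝ)
    (h1 : 0 < σ1sq) (h2 : 0 < σ2sq) (hρ0 : 0 ≤ ρsq) (hρ1 : ρsq < 1) :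
    (bivRayleighMoment σ1sq σ2sq ρsq (fun s₁ s₂ => s₁^2 * s₂^2)
        - bivRayleighMoment σ1sq σ2sq ρsq (fun s₁ _ => s₁^2)
          * bivRayleighMoment σ1sq σ2sq ρsq (fun _ s₂ => s₂^2))
      / Real.sqrt
          ((bivRayleighMoment σ1sq σ2sq ρsq (fun s₁ _ => s₁^4)
              - (bivRayleighMoment σ1sq σ2sq ρsq (fun s₁ _ => s₁^2))^2)
            * (bivRayleighMoment σ1sq σ2sq ρsq (fun _ s₂ => s₂^4)
              - (bivRayleighMoment σ1sq σ2sq ρsq (fun _ s₂ => s₂^2))^2))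
      = ρsq := by
  have hr : |ρsq| < 1 := abs_lt.mpr ⟨by linarith, hρ1⟩
  have htne : (1:ℝ) - ρsq ≠ 0 := by linarith
  have hkf : ∀ k : ℕ, ((k.factorial : ℝ)) ≠ 0 := fun k => by positivity
  -- series identifications
  have e10 : (fun k : ℕ => ((1+k).factorial : ℝ) * ((0+k).factorial : ℝ)
      / ((k.factorial : ℝ))^2 * ρsq^k) = fun k : ℕ => ((k:ℝ)+1) * ρsq^k := by
    funext k
    rw [Nat.add_comm 1 k, Nat.factorial_succ, Nat.zero_add]
    push_cast
    field_simp
  have e01 : (fun k : ℕ => ((0+k).factorial : ℝ) * ((1+k).factorial : ℝ)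
      / ((k.factorial : ℝ))^2 * ρsq^k) = fun k : ℕ => ((k:ℝ)+1) * ρsq^k := by
    funext k
    rw [Nat.add_comm 1 k, Nat.factorial_succ, Nat.zero_add]
    push_cast
    field_simp
  have e20 : (fun k : ℕ => ((2+k).factorial : ℝ) * ((0+k).factorial : ℝ)
      / ((k.factorial : ℝ))^2 * ρsq^k)
      = fun k : ℕ => ((k:ℝ)+1) * ((k:ℝ)+2) * ρsq^k := by
    funext k
    rw [show 2+k = (k+1)+1 by ring, Nat.factorial_succ, Nat.factorial_succ, Nat.zero_add]
    push_cast
    field_simp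
    ring
  have e02 : (fun k : ℕ => ((0+k).factorial : ℝ) * ((2+k).factorial : ℝ)
      / ((k.factorial : ℝ))^2 * ρsq^k)
      = fun k : ℕ => ((k:ℝ)+1) * ((k:ℝ)+2) * ρsq^k := by
    funext k
    rw [show 2+k = (k+1)+1 by ring, Nat.factorial_succ, Nat.factorial_succ, Nat.zero_add]
    push_cast
    field_simp
    ring
  have e11 : (fun k : ℕ => ((1+k).factorial : ℝ) * ((1+k).factorial : ℝ)
      / ((k.factorial : ℝ))^2 * ρsq^k)
      = fun k : ℕ => ((k:ℝ)+1)^2 * ρsq^k := by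
    funext k
    rw [Nat.add_comm 1 k, Nat.factorial_succ]
    push_cast
    field_simp
  -- moments
  have hE1 : bivRayleighMoment σ1sq σ2sq ρsq (fun s₁ _ => s₁^2) = σ1sq := by
    rw [show (fun (s₁ : ℝ) (_ : ℝ) => s₁^2) = (fun s₁ s₂ : ℝ => s₁^(2*1) * s₂^(2*0))
      from funext fun s₁ => funext fun s₂ => by norm_num]
    rw [moment_eq σ1sq σ2sq ρsq h1 h2 hρ0 hρ1 1 0
      (by rw [e10]; exact (hasSum_geom1 hr).summable)]
    rw [e10, (hasSum_geom1 hr).tsum_eq]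
    field_simp
  have hE2 : bivRayleighMoment σ1sq σ2sq ρsq (fun _ s₂ => s₂^2) = σ2sq := by
    rw [show (fun (_ : ℝ) (s₂ : ℝ) => s₂^2) = (fun s₁ s₂ : ℝ => s₁^(2*0) * s₂^(2*1))
      from funext fun s₁ => funext fun s₂ => by norm_num]
    rw [moment_eq σ1sq σ2sq ρsq h1 h2 hρ0 hρ1 0 1
      (by rw [e01]; exact (hasSum_geom1 hr).summable)]
    rw [e01, (hasSum_geom1 hr).tsum_eq]
    field_simp
  have hE4a : bivRayleighMoment σ1sq σ2sq ρsq (fun s₁ _ => s₁^4) = 2*σ1sq^2 := by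
    rw [show (fun (s₁ : ℝ) (_ : ℝ) => s₁^4) = (fun s₁ s₂ : ℝ => s₁^(2*2) * s₂^(2*0))
      from funext fun s₁ => funext fun s₂ => by norm_num]
    rw [moment_eq σ1sq σ2sq ρsq h1 h2 hρ0 hρ1 2 0
      (by rw [e20]; exact (hasSum_geom2 hr).summable)]
    rw [e20, (hasSum_geom2 hr).tsum_eq]
    field_simp
  have hE4b : bivRayleighMoment σ1sq σ2sq ρsq (fun _ s₂ => s₂^4) = 2*σ2sq^2 := by
    rw [show (fun (_ : ℝ) (s₂ : ℝ) => s₂^4) = (fun s₁ s₂ : ℝ => s₁^(2*0) * s₂^(2*2))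
      from funext fun s₁ => funext fun s₂ => by norm_num]
    rw [moment_eq σ1sq σ2sq ρsq h1 h2 hρ0 hρ1 0 2
      (by rw [e02]; exact (hasSum_geom2 hr).summable)]
    rw [e02, (hasSum_geom2 hr).tsum_eq]
    field_simp
  have hE11 : bivRayleighMoment σ1sq σ2sq ρsq (fun s₁ s₂ => s₁^2 * s₂^2)
      = σ1sq*σ2sq*(1+ρsq) := by
    rw [show (fun (s₁ : ℝ) (s₂ : ℝ) => s₁^2 * s₂^2) = (fun s₁ s₂ : ℝ => s₁^(2*1) * s₂^(2*1))
      from funext fun s₁ => funext fun s₂ => by norm_num]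
    rw [moment_eq σ1sq σ2sq ρsq h1 h2 hρ0 hρ1 1 1
      (by rw [e11]; exact (hasSum_geom11 hr).summable)]
    rw [e11, (hasSum_geom11 hr).tsum_eq]
    field_simp
  rw [hE1, hE2, hE4a, hE4b, hE11]
  rw [show (2*σ1sq^2 - σ1sq^2) * (2*σ2sq^2 - σ2sq^2) = (σ1sq*σ2sq)^2 by ring]
  rw [Real.sqrt_sq (by positivity)]
  rw [div_eq_iff (by positivity : (σ1sq*σ2sq) ≠ 0)]
  ring
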